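/- Let n ≥ 2, let (G, ·) be a group with automorphism θ and b ∈ G satisfying θ(b) = b and θ^{n-1}(x) = b·x·b⁻¹ for all x, and let (H, ∗) be a group with automorphism η and c ∈ H satisfying η(c) = c and η^{n-1}(y) = c∗y∗c⁻¹ for all y. Let f and h be the derived n-ary operations of der_{θ,b}(G, ·) and der_{η,c}(H, ∗) respectively. If ψ : G → H satisfies ψ(f(x₁,...,xₙ)) = h(ψ(x₁),...,ψ(xₙ)) for all x₁,...,xₙ ∈ G, then there exist a ∈ H and a group homomorphism φ : (G, ·) → (H, ∗) such that ψ(x) = φ(x) ∗ a for all x ∈ G, and moreover h(a, a, ..., a) = φ(b) ∗ a and φ ∘ θ = I_a ∘ η ∘ φ, where I_a denotes the inner automorphism y ↦ a ∗ y ∗ a⁻¹ of H. -/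

import Mathlib

/-- The `n`-ary operation `(θ, b)`-derived from a group:
`f(x₁,…,xₙ) = x₁·θ(x₂)·θ²(x₃)⋯θ^{n-1}(xₙ)·b`. -/
def derOp {G : Type*} [Group G] (n : ℕ) (θ : MulAut G) (b : G) : (Fin n → G) → G :=
  fun x => (List.ofFn fun i : Fin n => (θ ^ (i : ℕ)) (x i)).prod * b

lemma derOp_const_one {K : Type*} [Group K] (n : ℕ) (κ : MulAut K) (d : K) :
    derOp n κ d (fun _ => 1) = d := by
  simp [derOp]

lemma derOp_cons {K : Type*} [Group K] (m : ℕ) (κ : MulAut K) (d u v : K) (w : Fin m → K) :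
    derOp (m+2) κ d (Fin.cons u (Fin.cons v w)) =
      u * κ v * ((List.ofFn fun i : Fin m => (κ ^ ((i:ℕ)+2)) (w i)).prod * d) := by
  simp [derOp, List.ofFn_succ, Fin.cons_zero, Fin.cons_succ, pow_succ, mul_assoc]

/-- every homomorphism of derived polyadic groups has the form
`ψ = R(a) ∘ φ` for a group homomorphism `φ` and an element `a` satisfying the two
compatibility conditions. -/
theorem polyadic_hom_decomposition {G H : Type*} [Group G] [Group H] (n : ℕ) (hn : 2 ≤ n)
    (θ : MulAut G) (b : G) (hθb : θ b = b)
    (hθn : ∀ x : G, (θ ^ (n - 1)) x = b * x * b⁻¹)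
    (η : MulAut H) (c : H) (hηc : η c = c)
    (hηn : ∀ y : H, (η ^ (n - 1)) y = c * y * c⁻¹)
    (ψ : G → H)
    (hψ : ∀ x : Fin n → G, ψ (derOp n θ b x) = derOp n η c (fun i => ψ (x i))) :
    ∃ (a : H) (φ : G →* H),
      (∀ x : G, ψ x = φ x * a) ∧
      derOp n η c (fun _ => a) = φ b * a ∧
      (∀ x : G, φ (θ x) = a * η (φ x) * a⁻¹) := by
  obtain ⟨m, rfl⟩ : ∃ m, n = m + 2 := ⟨n - 2, by omega⟩
  set a : H := ψ 1 with ha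
  set M : H := (List.ofFn fun i : Fin m => (η ^ ((i:ℕ)+2)) a).prod * c with hM
  have key : ∀ u v : G, ψ (u * θ v * b) = ψ u * η (ψ v) * M := by
    intro u v
    have h := hψ (Fin.cons u (Fin.cons v (fun _ => 1)))
    have hf : (fun i => ψ ((Fin.cons u (Fin.cons v (fun _ => 1)) : Fin (m+2) → G) i))
        = Fin.cons (ψ u) (Fin.cons (ψ v) (fun _ => a)) := by
      funext i
      refine Fin.cases rfl (fun j => ?_) i
      refine Fin.cases rfl (fun k => ?_) j
      simp [ha]
    rw [hf, derOp_cons, derOp_cons] at h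
    simpa [mul_assoc] using h
  have mul2 : ∀ u w : G, ψ (u * w) = ψ u * a⁻¹ * ψ w := by
    have e : ∀ u w : G, ψ (u * w) = ψ u * (η (ψ (θ.symm (w * b⁻¹))) * M) := by
      intro u w
      have h := key u (θ.symm (w * b⁻¹))
      rw [MulEquiv.apply_symm_apply] at h
      rw [show u * (w * b⁻¹) * b = u * w by group] at h
      rw [h]; group
    intro u w
    have h1 := e 1 w
    rw [one_mul, ← ha] at h1
    have h2 : η (ψ (θ.symm (w * b⁻¹))) * M = a⁻¹ * ψ w := by
      rw [h1]; group
    rw [e u w, h2]; group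
  refine ⟨a, ⟨⟨fun x => ψ x * a⁻¹, by simp [ha]⟩,
    fun x y => by simp only; rw [mul2]; group⟩, fun x => by simp, ?_, ?_⟩
  · have h := hψ (fun _ => 1)
    rw [derOp_const_one] at h
    rw [← h]; simp
  · intro x
    have k1 := key 1 x
    have k2 := key 1 1
    rw [one_mul, ← ha] at k1 k2
    rw [map_one, one_mul] at k2
    have k3 := mul2 (θ x) b
    rw [k1, k2] at k3
    simp only [MonoidHom.coe_mk, OneHom.coe_mk]
    have : ψ (θ x) = a * η (ψ x) * (η a)⁻¹ := by
      have h4 : a * η (ψ x) * M = (ψ (θ x) * η a) * M := by rw [k3]; group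
      have h5 := mul_right_cancel h4
      rw [h5]; group
    rw [this, map_mul, map_inv]; group
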